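/- The product kinematic measure of pairs of lines (l, l*) whose intersection point lies in an area element dx of the plane equals 2π dx; that is, [μ × μ]({(l,l*) : l ∩ l* ∈ A}) = 2π · Area(A) for every Borel set A ⊆ ℝ². -/

import Mathlib

open MeasureTheory Real Set

namespace Stmt9Aux

lemma mp : MeasurePreserving
    (fun q : (ℝ × ℝ) × (ℝ × ℝ) => ((q.1.1, q.2.1), (q.1.2, q.2.2)))
    (volume : Measure ((ℝ × ℝ) × (ℝ × ℝ))) volume := by
  have hswap : MeasurePreserving (Prod.swap : ℝ × ℝ → ℝ × ℝ) volume volume := by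
    rw [Measure.volume_eq_prod]; exact Measure.measurePreserving_swap
  have hid : MeasurePreserving (id : ℝ → ℝ) volume volume := MeasurePreserving.id _
  have hA1 : MeasurePreserving (MeasurableEquiv.prodAssoc : (ℝ × ℝ) × (ℝ × ℝ) ≃ᵐ ℝ × ℝ × ℝ × ℝ)
      volume volume := volume_preserving_prodAssoc
  have hA2 : MeasurePreserving (MeasurableEquiv.prodAssoc : (ℝ × ℝ) × ℝ ≃ᵐ ℝ × ℝ × ℝ)
      volume volume := volume_preserving_prodAssoc
  have hswapid : MeasurePreserving (Prod.map (Prod.swap : ℝ × ℝ → ℝ × ℝ) (id : ℝ → ℝ))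
      volume volume := by
    rw [Measure.volume_eq_prod (α := ℝ × ℝ)]
    exact hswap.prod hid
  have hh : MeasurePreserving
      (fun x : ℝ × ℝ × ℝ => (x.2.1, (x.1, x.2.2))) volume volume :=
    (hA2.comp hswapid).comp (hA2.symm _)
  have hidh : MeasurePreserving (Prod.map (id : ℝ → ℝ)
      (fun x : ℝ × ℝ × ℝ => (x.2.1, (x.1, x.2.2)))) volume volume := by
    rw [Measure.volume_eq_prod (α := ℝ)]
    exact hid.prod hh
  exact ((hA1.symm _).comp hidh).comp hA1

lemma inner_int (y : ℝ) (hy : y ∈ Ico 0 π) :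
    ∫⁻ x in Ico 0 π, ENNReal.ofReal |Real.sin (y - x)| = ENNReal.ofReal 2 := by
  obtain ⟨hy0, hyπ⟩ := hy
  rw [Measure.restrict_congr_set Ico_ae_eq_Ioc]
  have hcont : Continuous fun x => |Real.sin (y - x)| := by continuity
  rw [← ofReal_integral_eq_lintegral_ofReal
      (hcont.integrableOn_Ioc) (Filter.Eventually.of_forall fun x => abs_nonneg _)]
  congr 1
  rw [← intervalIntegral.integral_of_le pi_pos.le]
  have hsplit := intervalIntegral.integral_add_adjacent_intervals
    (a := 0) (b := y) (c := π) (μ := volume)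
    (hcont.intervalIntegrable 0 y) (hcont.intervalIntegrable y π)
  rw [← hsplit]
  have h1 : ∫ x in (0:ℝ)..y, |Real.sin (y - x)| = 1 - Real.cos y := by
    have : ∀ x ∈ uIcc (0:ℝ) y, |Real.sin (y - x)| = Real.sin (y - x) := by
      intro x hx
      rw [uIcc_of_le hy0] at hx
      exact abs_of_nonneg (Real.sin_nonneg_of_nonneg_of_le_pi (by linarith [hx.2])
        (by linarith [hx.1, hyπ]))
    rw [intervalIntegral.integral_congr this, intervalIntegral.integral_comp_sub_left
      (fun x => Real.sin x) y]
    simp [integral_sin]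
  have h2 : ∫ x in y..π, |Real.sin (y - x)| = 1 + Real.cos y := by
    have : ∀ x ∈ uIcc y π, |Real.sin (y - x)| = Real.sin (x - y) := by
      intro x hx
      rw [uIcc_of_le hyπ.le] at hx
      have : Real.sin (y - x) = -Real.sin (x - y) := by
        rw [← Real.sin_neg]; ring_nf
      rw [this, abs_neg]
      exact abs_of_nonneg (Real.sin_nonneg_of_nonneg_of_le_pi (by linarith [hx.1])
        (by linarith [hx.2]))
    rw [intervalIntegral.integral_congr this, intervalIntegral.integral_comp_sub_right
      (fun x => Real.sin x) y]
    simp [integral_sin, Real.cos_pi_sub]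
  rw [h1, h2]; ring

lemma double_int :
    ∫⁻ φ : ℝ × ℝ in (Ico 0 π) ×ˢ (Ico 0 π), ENNReal.ofReal |Real.sin (φ.1 - φ.2)|
      = ENNReal.ofReal (2 * π) := by
  rw [Measure.volume_eq_prod, ← Measure.prod_restrict]
  rw [lintegral_prod (fun φ : ℝ × ℝ => ENNReal.ofReal |Real.sin (φ.1 - φ.2)|)
    ((ENNReal.measurable_ofReal.comp ((continuous_abs.comp
      (Real.continuous_sin.comp (continuous_fst.sub continuous_snd))).measurable)).aemeasurable)]
  rw [setLIntegral_congr_fun measurableSet_Ico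
    (fun y hy => inner_int y hy)]
  rw [setLIntegral_const, Real.volume_Ico, sub_zero,
    ← ENNReal.ofReal_mul (by norm_num)]

noncomputable def dd (φ : ℝ × ℝ) : ℝ :=
  Real.sin φ.1 * Real.cos φ.2 - Real.cos φ.1 * Real.sin φ.2

noncomputable def gg (φ ρ : ℝ × ℝ) : ℝ × ℝ :=
  ((Real.cos φ.2 / dd φ) * ρ.1 + (-Real.cos φ.1 / dd φ) * ρ.2,
   (-Real.sin φ.2 / dd φ) * ρ.1 + (Real.sin φ.1 / dd φ) * ρ.2)

noncomputable def lin2 (a b c d : ℝ) : (ℝ × ℝ) →ₗ[ℝ] (ℝ × ℝ) :=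
  Matrix.toLin (Module.Basis.finTwoProd ℝ) (Module.Basis.finTwoProd ℝ) !![a, b; c, d]

lemma lin2_det (a b c d : ℝ) : LinearMap.det (lin2 a b c d) = a * d - b * c := by
  rw [lin2, LinearMap.det_toLin]
  simp [Matrix.det_fin_two]

lemma vol_preimage (a b c d : ℝ) (h : a * d - b * c ≠ 0) (A : Set (ℝ × ℝ)) :
    volume ((fun x : ℝ × ℝ => (a * x.1 + b * x.2, c * x.1 + d * x.2)) ⁻¹' A)
      = ENNReal.ofReal |(a * d - b * c)⁻¹| * volume A := by
  have hdet : LinearMap.det (lin2 a b c d) ≠ 0 := by rwa [lin2_det]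
  have h2 := Measure.addHaar_preimage_linearMap (volume : Measure (ℝ × ℝ)) hdet A
  rw [lin2_det] at h2
  rw [← h2]
  congr 1
  ext x
  simp [lin2, Matrix.toLin_finTwoProd_apply]

lemma dd_eq (φ : ℝ × ℝ) : dd φ = Real.sin (φ.1 - φ.2) := (Real.sin_sub _ _).symm

lemma dd_ne {φ : ℝ × ℝ} (h1 : φ.1 ∈ Ico (0:ℝ) π) (h2 : φ.2 ∈ Ico (0:ℝ) π)
    (hne : φ.1 ≠ φ.2) : dd φ ≠ 0 := by
  rw [dd_eq]
  intro h
  rw [Real.sin_eq_zero_iff_of_lt_of_lt (by linarith [h1.1, h1.2, h2.1, h2.2])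
    (by linarith [h1.1, h1.2, h2.1, h2.2])] at h
  exact hne (by linarith)

lemma slice_eq (A : Set (ℝ × ℝ)) {φ : ℝ × ℝ} (hd : dd φ ≠ 0) :
    {ρ : ℝ × ℝ | ∃ p ∈ A, p.1 * Real.sin φ.1 + p.2 * Real.cos φ.1 = ρ.1 ∧
        p.1 * Real.sin φ.2 + p.2 * Real.cos φ.2 = ρ.2} = gg φ ⁻¹' A := by
  have hd' : Real.sin φ.1 * Real.cos φ.2 - Real.cos φ.1 * Real.sin φ.2 ≠ 0 := hd
  ext ρ
  constructor
  · rintro ⟨p, hp, h1, h2⟩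
    have : gg φ ρ = p := by
      unfold gg
      rw [← h1, ← h2]
      ext <;> (simp only []; field_simp [dd]; unfold dd; ring)
    simpa [Set.mem_preimage, this]
  · intro h
    refine ⟨gg φ ρ, h, ?_, ?_⟩ <;> (unfold gg; simp only []; field_simp [dd]; unfold dd; ring)

lemma vol_slice (A : Set (ℝ × ℝ)) {φ : ℝ × ℝ} (hd : dd φ ≠ 0) :
    volume (gg φ ⁻¹' A) = ENNReal.ofReal |Real.sin (φ.1 - φ.2)| * volume A := by
  have hdet : (Real.cos φ.2 / dd φ) * (Real.sin φ.1 / dd φ)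
      - (-Real.cos φ.1 / dd φ) * (-Real.sin φ.2 / dd φ) = (dd φ)⁻¹ := by
    rw [div_mul_div_comm, div_mul_div_comm, div_sub_div_same,
      show Real.cos φ.2 * Real.sin φ.1 - -Real.cos φ.1 * -Real.sin φ.2 = dd φ by
        unfold dd; ring,
      div_mul_eq_div_div, div_self hd, one_div]
  have h := vol_preimage (Real.cos φ.2 / dd φ) (-Real.cos φ.1 / dd φ)
    (-Real.sin φ.2 / dd φ) (Real.sin φ.1 / dd φ) (by rw [hdet]; exact inv_ne_zero hd) A
  rw [hdet, inv_inv] at h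
  rw [← dd_eq]
  exact h

lemma diag_null : volume {p : ℝ × ℝ | p.1 = p.2} = 0 := by
  have hm : MeasurableSet {p : ℝ × ℝ | p.1 = p.2} :=
    (isClosed_eq continuous_fst continuous_snd).measurableSet
  rw [Measure.volume_eq_prod, Measure.prod_apply hm]
  have : ∀ a : ℝ, (Prod.mk a ⁻¹' {p : ℝ × ℝ | p.1 = p.2}) = {a} := by
    intro a; ext b; simp [eq_comm]
  simp [this]

def dom : Set (ℝ × ℝ) := (Ico 0 π ×ˢ Ico 0 π) ∩ {φ | φ.1 ≠ φ.2}

lemma dom_meas : MeasurableSet dom :=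
  (measurableSet_Ico.prod measurableSet_Ico).inter
    (isClosed_eq continuous_fst continuous_snd).measurableSet.compl

def Toff (A : Set (ℝ × ℝ)) : Set ((ℝ × ℝ) × (ℝ × ℝ)) :=
  {x | x.1 ∈ dom ∧ gg x.1 x.2 ∈ A}

lemma gg_meas : Measurable fun x : (ℝ × ℝ) × (ℝ × ℝ) => gg x.1 x.2 := by
  unfold gg dd
  fun_prop

lemma Toff_meas {A : Set (ℝ × ℝ)} (hA : MeasurableSet A) : MeasurableSet (Toff A) := by
  have : Toff A = (dom ×ˢ (univ : Set (ℝ × ℝ))) ∩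
      ((fun x : (ℝ × ℝ) × (ℝ × ℝ) => gg x.1 x.2) ⁻¹' A) := by
    ext x; simp [Toff, Set.mem_prod]
  rw [this]
  exact (dom_meas.prod MeasurableSet.univ).inter (gg_meas hA)

lemma vol_Toff {A : Set (ℝ × ℝ)} (hA : MeasurableSet A) :
    volume (Toff A) = ENNReal.ofReal (2 * π) * volume A := by
  rw [Measure.volume_eq_prod, Measure.prod_apply (Toff_meas hA)]
  have key : ∀ φ : ℝ × ℝ, volume (Prod.mk φ ⁻¹' Toff A)
      = Set.indicator ((Ico 0 π) ×ˢ (Ico 0 π))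
        (fun φ => ENNReal.ofReal |Real.sin (φ.1 - φ.2)| * volume A) φ := by
    intro φ
    by_cases hφ : φ ∈ (Ico 0 π) ×ˢ (Ico 0 π)
    · rw [Set.indicator_of_mem hφ]
      by_cases hne : φ.1 = φ.2
      · have h0 : Prod.mk φ ⁻¹' Toff A = ∅ := by
          ext ρ; simp [Toff, dom, hne]
        rw [h0, measure_empty, hne, sub_self, Real.sin_zero, abs_zero,
          ENNReal.ofReal_zero, zero_mul]
      · have hd : dd φ ≠ 0 := dd_ne hφ.1 hφ.2 hne
        have h0 : Prod.mk φ ⁻¹' Toff A = gg φ ⁻¹' A := by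
          ext ρ; simp [Toff, dom, hφ.1.1, hφ.1.2, hφ.2.1, hφ.2.2, hne]
        rw [h0, vol_slice A hd]
    · rw [Set.indicator_of_notMem hφ]
      have h0 : Prod.mk φ ⁻¹' Toff A = ∅ := by
        ext ρ
        simp only [Set.mem_preimage, Toff, Set.mem_setOf_eq, Set.mem_empty_iff_false,
          iff_false, not_and]
        intro hdom
        exact absurd hdom.1 hφ
      rw [h0, measure_empty]
  rw [lintegral_congr key, lintegral_indicator
    (measurableSet_Ico.prod measurableSet_Ico) _]
  have hmeas : Measurable fun φ : ℝ × ℝ => ENNReal.ofReal |Real.sin (φ.1 - φ.2)| := by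
    fun_prop
  rw [lintegral_mul_const _ hmeas]
  rw [double_int]

end Stmt9Aux

open Stmt9Aux in
/-- The product kinematic measure of pairs of lines whose intersection point lies
in a Borel set `A ⊆ ℝ²` equals `2π · Area(A)`. Lines are parametrized by
`(φ,ρ) ∈ [0,π) × ℝ` with Lebesgue measure; the point `p` lies on the line `(φ,ρ)`
iff `p.1 * sin φ + p.2 * cos φ = ρ`. -/
theorem stmt9 (A : Set (ℝ × ℝ)) (hA : MeasurableSet A) :
    volume {q : (ℝ × ℝ) × (ℝ × ℝ) |
        q.1.1 ∈ Set.Ico (0:ℝ) π ∧ q.2.1 ∈ Set.Ico (0:ℝ) π ∧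
        ∃ p ∈ A, p.1 * Real.sin q.1.1 + p.2 * Real.cos q.1.1 = q.1.2 ∧
                 p.1 * Real.sin q.2.1 + p.2 * Real.cos q.2.1 = q.2.2}
      = ENNReal.ofReal (2 * π) * volume A := by
  set f := fun q : (ℝ × ℝ) × (ℝ × ℝ) => ((q.1.1, q.2.1), (q.1.2, q.2.2)) with hf
  set D : Set (ℝ × ℝ) := {p : ℝ × ℝ | p.1 = p.2} with hD
  set S := {q : (ℝ × ℝ) × (ℝ × ℝ) |
        q.1.1 ∈ Set.Ico (0:ℝ) π ∧ q.2.1 ∈ Set.Ico (0:ℝ) π ∧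
        ∃ p ∈ A, p.1 * Real.sin q.1.1 + p.2 * Real.cos q.1.1 = q.1.2 ∧
                 p.1 * Real.sin q.2.1 + p.2 * Real.cos q.2.1 = q.2.2} with hS
  have h1 : f ⁻¹' Toff A ⊆ S := by
    rintro q ⟨⟨⟨hφ1, hφ2⟩, hne⟩, hgA⟩
    have hd : dd (q.1.1, q.2.1) ≠ 0 := dd_ne hφ1 hφ2 hne
    have : (q.1.2, q.2.2) ∈ gg (q.1.1, q.2.1) ⁻¹' A := hgA
    rw [← slice_eq A hd] at this
    obtain ⟨p, hp, e1, e2⟩ := this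
    exact ⟨hφ1, hφ2, p, hp, e1, e2⟩
  have h2 : S ⊆ f ⁻¹' Toff A ∪ f ⁻¹' (D ×ˢ D) := by
    rintro q ⟨hφ1, hφ2, p, hp, e1, e2⟩
    by_cases h : q.1.1 = q.2.1
    · right
      refine ⟨h, ?_⟩
      show q.1.2 = q.2.2
      rw [← e1, ← e2, h]
    · left
      have hd : dd (q.1.1, q.2.1) ≠ 0 := dd_ne hφ1 hφ2 h
      refine ⟨⟨⟨hφ1, hφ2⟩, h⟩, ?_⟩
      show (q.1.2, q.2.2) ∈ gg (q.1.1, q.2.1) ⁻¹' A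
      rw [← slice_eq A hd]
      exact ⟨p, hp, e1, e2⟩
  have hDmeas : MeasurableSet D := (isClosed_eq continuous_fst continuous_snd).measurableSet
  have hNnull : volume (f ⁻¹' (D ×ˢ D)) = 0 := by
    rw [mp.measure_preimage (hDmeas.prod hDmeas).nullMeasurableSet,
      Measure.volume_eq_prod, Measure.prod_prod, diag_null, zero_mul]
  have hOff : volume (f ⁻¹' Toff A) = volume (Toff A) :=
    mp.measure_preimage (Toff_meas hA).nullMeasurableSet
  have hvol : volume S = volume (Toff A) := by
    refine le_antisymm ?_ ?_
    · calc volume S ≤ volume (f ⁻¹' Toff A ∪ f ⁻¹' (D ×ˢ D)) := measure_mono h2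
        _ ≤ volume (f ⁻¹' Toff A) + volume (f ⁻¹' (D ×ˢ D)) := measure_union_le _ _
        _ = volume (Toff A) := by rw [hNnull, add_zero, hOff]
    · rw [← hOff]; exact measure_mono h1
  rw [hvol, vol_Toff hA]
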